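/- Define g_n(z) = n/2 − γ_n(z), where γ_n are the recurrence coefficients of the monic truncated Hermite polynomials. Then for all n ≥ 1, (n/2 − g_n)·(g_n + g_{n+1})·(g_n + g_{n−1}) = z²·g_n². -/

import Mathlib

open Polynomial

/-- The truncated Hermite linear functional `L[p] = ∫_{-z}^{z} p(x) e^{-x²} dx`. -/
noncomputable def truncL (z : ℝ) (p : Polynomial ℝ) : ℝ :=
  ∫ x in (-z)..z, p.eval x * Real.exp (-x ^ 2)

open MeasureTheory
open scoped ENNReal

private lemma truncL_cont (p : Polynomial ℝ) :
    Continuous (fun x : ℝ => p.eval x * Real.exp (-x ^ 2)) := by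
  fun_prop

private lemma truncL_ii (z : ℝ) (p : Polynomial ℝ) :
    IntervalIntegrable (fun x : ℝ => p.eval x * Real.exp (-x ^ 2)) volume (-z) z :=
  (truncL_cont p).intervalIntegrable _ _

private lemma truncL_add (z : ℝ) (p q : Polynomial ℝ) :
    truncL z (p + q) = truncL z p + truncL z q := by
  unfold truncL
  rw [← intervalIntegral.integral_add (truncL_ii z p) (truncL_ii z q)]
  simp [add_mul]

private lemma truncL_Cmul (z : ℝ) (c : ℝ) (p : Polynomial ℝ) :
    truncL z (C c * p) = c * truncL z p := by
  unfold truncL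
  rw [← intervalIntegral.integral_const_mul]
  simp [mul_assoc]

private lemma truncL_ibp (z : ℝ) (q : Polynomial ℝ) :
    truncL z (derivative q) =
      (q.eval z - q.eval (-z)) * Real.exp (-z ^ 2) + 2 * truncL z (X * q) := by
  have key : ∀ x : ℝ, HasDerivAt (fun t : ℝ => q.eval t * Real.exp (-t ^ 2))
      ((derivative q).eval x * Real.exp (-x ^ 2) - 2 * ((X * q).eval x * Real.exp (-x ^ 2))) x := by
    intro x
    have h1 : HasDerivAt (fun t : ℝ => q.eval t) ((derivative q).eval x) x := q.hasDerivAt x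
    have h2 : HasDerivAt (fun t : ℝ => -t ^ 2) (-(2 * x)) x := by
      have h := (hasDerivAt_pow 2 x).neg
      simp at h
      exact h
    have h3 := h2.exp
    have h4 : HasDerivAt (fun t : ℝ => q.eval t * Real.exp (-t ^ 2)) _ x := h1.mul h3
    convert h4 using 1
    simp [eval_mul]
    ring
  have hint : IntervalIntegrable (fun x : ℝ => (derivative q).eval x * Real.exp (-x ^ 2)
      - 2 * ((X * q).eval x * Real.exp (-x ^ 2))) volume (-z) z :=
    (truncL_ii z (derivative q)).sub ((truncL_ii z (X * q)).const_mul 2)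
  have hkey := intervalIntegral.integral_eq_sub_of_hasDerivAt (fun x _ => key x) hint
  have hsub := intervalIntegral.integral_sub (truncL_ii z (derivative q))
    ((truncL_ii z (X * q)).const_mul 2)
  rw [hsub] at hkey
  have h2z : ((-z : ℝ)) ^ 2 = z ^ 2 := by ring
  rw [intervalIntegral.integral_const_mul] at hkey
  unfold truncL
  rw [h2z] at hkey
  linarith [hkey]

private lemma truncL_zero (z : ℝ) : truncL z 0 = 0 := by
  unfold truncL; simp

private lemma orth_aux (z : ℝ) (P : ℕ → Polynomial ℝ)
    (hmonic : ∀ n, (P n).Monic) (hdeg : ∀ n, (P n).natDegree = n)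
    (horth : ∀ m n, m ≠ n → truncL z (P m * P n) = 0) (hP0 : P 0 = 1) :
    ∀ (d : ℕ) (m : ℕ) (q : Polynomial ℝ), q.natDegree ≤ d → q.degree < (m : ℕ) →
      truncL z (q * P m) = 0 := by
  intro d
  induction d with
  | zero =>
    intro m q hq0 hqm
    by_cases h0 : q = 0
    · simp [h0, truncL_zero]
    · have he : q = C (q.coeff 0) := Polynomial.eq_C_of_natDegree_le_zero hq0
      have hm : m ≠ 0 := by
        rintro rfl
        rw [Polynomial.degree_eq_natDegree h0] at hqm
        exact absurd hqm (by simp)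
      have h0m : truncL z (P m) = 0 := by
        have := horth 0 m (Ne.symm hm)
        rwa [hP0, one_mul] at this
      rw [he, truncL_Cmul, h0m, mul_zero]
  | succ d ih =>
    intro m q hq0 hqm
    by_cases h0 : q = 0
    · simp [h0, truncL_zero]
    by_cases hd : q.natDegree ≤ d
    · exact ih m q hd hqm
    have hdegq : q.degree = (q.natDegree : ℕ) := Polynomial.degree_eq_natDegree h0
    set e := q.natDegree with hee
    have hem : e < m := by
      have := Polynomial.natDegree_lt_iff_degree_lt (n := m) h0
      exact this.mpr hqm
    set r := q - C q.leadingCoeff * P e with hr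
    have hq_eq : q * P m = r * P m + C q.leadingCoeff * (P e * P m) := by
      rw [hr]; ring
    have hlc : q.leadingCoeff ≠ 0 := Polynomial.leadingCoeff_ne_zero.mpr h0
    have hdegC : (C q.leadingCoeff * P e).degree = (e : ℕ) := by
      rw [Polynomial.degree_C_mul hlc, Polynomial.degree_eq_natDegree (hmonic e).ne_zero, hdeg e]
    have hrdeg : r.degree < (e : ℕ) := by
      have hlceq : q.leadingCoeff = (C q.leadingCoeff * P e).leadingCoeff := by
        rw [Polynomial.leadingCoeff_mul, Polynomial.leadingCoeff_C, (hmonic e).leadingCoeff, mul_one]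
      have := Polynomial.degree_sub_lt (by rw [hdegC, hdegq]) h0 hlceq
      rwa [hdegq] at this
    have hrnat : r.natDegree ≤ d := by
      by_cases hr0 : r = 0
      · simp [hr0]
      · have := (Polynomial.natDegree_lt_iff_degree_lt (n := e) hr0).mpr hrdeg
        omega
    have hrm : r.degree < (m : ℕ) := lt_trans hrdeg (by exact_mod_cast hem)
    rw [hq_eq, truncL_add, truncL_Cmul, ih m r hrnat hrm, horth e m (by omega), mul_zero, add_zero]

private lemma truncL_sq_pos (z : ℝ) (hz : 0 < z) (p : Polynomial ℝ) (hp : p ≠ 0) :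
    0 < truncL z (p * p) := by
  have hle : (-z : ℝ) ≤ z := by linarith
  unfold truncL
  rw [intervalIntegral.integral_of_le hle]
  set f : ℝ → ℝ := fun x => (p * p).eval x * Real.exp (-x ^ 2) with hf
  have hfc : Continuous f := by fun_prop
  have hnn : 0 ≤ᵐ[volume.restrict (Set.Ioc (-z) z)] f := by
    filter_upwards with x
    simp only [hf, eval_mul]
    exact mul_nonneg (mul_self_nonneg _) (Real.exp_pos _).le
  have hint : IntegrableOn f (Set.Ioc (-z) z) volume :=
    hfc.integrableOn_Ioc
  rw [MeasureTheory.setIntegral_pos_iff_support_of_nonneg_ae hnn hint]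
  have hroots : ({x : ℝ | p.IsRoot x}).Finite := Polynomial.finite_setOf_isRoot hp
  have hsub : Set.Ioc (-z) z \ {x : ℝ | p.IsRoot x} ⊆ Function.support f ∩ Set.Ioc (-z) z := by
    rintro x ⟨hx1, hx2⟩
    refine ⟨?_, hx1⟩
    simp only [Function.mem_support, hf, eval_mul]
    have h1 : p.eval x ≠ 0 := hx2
    exact mul_ne_zero (mul_ne_zero h1 h1) (Real.exp_pos _).ne'
  calc (0 : ℝ≥0∞) < volume (Set.Ioc (-z) z) := by
        rw [Real.volume_Ioc]
        rw [ENNReal.ofReal_pos]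
        linarith
    _ = volume (Set.Ioc (-z) z \ {x : ℝ | p.IsRoot x}) := by
        rw [measure_diff_null (hroots.measure_zero _)]
    _ ≤ volume (Function.support f ∩ Set.Ioc (-z) z) := measure_mono hsub

theorem truncated_hermite_laguerre_freud_g (z : ℝ) (hz : 0 < z)
    (P : ℕ → Polynomial ℝ) (γ h : ℕ → ℝ)
    (hmonic : ∀ n, (P n).Monic) (hdeg : ∀ n, (P n).natDegree = n)
    (horth : ∀ m n, m ≠ n → truncL z (P m * P n) = 0)
    (hP0 : P 0 = 1) (hP1 : P 1 = X)
    (hrec : ∀ n, X * P (n + 1) = P (n + 2) + C (γ (n + 1)) * P n)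
    (hh : ∀ n, h n = truncL z (P n * P n)) (hγ0 : γ 0 = 0)
    (g : ℕ → ℝ) (hg : ∀ n, g n = (n : ℝ) / 2 - γ n) :
    ∀ n : ℕ, 1 ≤ n →
      ((n : ℝ) / 2 - g n) * (g n + g (n + 1)) * (g n + g (n - 1)) = z ^ 2 * g n ^ 2 := by
  have orth : ∀ (m : ℕ) (q : Polynomial ℝ), q.degree < (m : ℕ) → truncL z (q * P m) = 0 :=
    fun m q hq => orth_aux z P hmonic hdeg horth hP0 q.natDegree m q le_rfl hq
  have ddeg : ∀ n : ℕ, (P n).degree = (n : ℕ) := fun n => by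
    rw [Polynomial.degree_eq_natDegree (hmonic n).ne_zero, hdeg n]
  have rec' : ∀ n : ℕ, X * P n = P (n + 1) + C (γ n) * P (n - 1) := by
    intro n
    cases n with
    | zero => simp [hP0, hP1, hγ0]
    | succ m => simpa using hrec m
  -- parity
  have hpar : ∀ (n : ℕ) (x : ℝ), (P n).eval (-x) = (-1 : ℝ) ^ n * (P n).eval x := by
    intro n
    induction n using Nat.strong_induction_on with
    | _ n ih =>
      match n with
      | 0 => intro x; simp [hP0]
      | 1 => intro x; simp [hP1]
      | (m + 2) =>
        intro x
        have hPm2 : P (m + 2) = X * P (m + 1) - C (γ (m + 1)) * P m :=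
          eq_sub_of_add_eq (hrec m).symm
        rw [hPm2]
        simp only [eval_sub, eval_mul, eval_X, eval_C]
        rw [ih (m + 1) (by omega), ih m (by omega)]
        ring
  have hcoeff1 : ∀ n : ℕ, (P n).coeff n = 1 := by
    intro n
    have := (hmonic n).coeff_natDegree
    rwa [hdeg n] at this
  have hcoeff0 : ∀ n k : ℕ, n < k → (P n).coeff k = 0 := by
    intro n k hk
    exact Polynomial.coeff_eq_zero_of_natDegree_lt (by rw [hdeg n]; omega)
  have hd1 : ∀ n : ℕ, (derivative (P (n + 1)) - C ((n : ℝ) + 1) * P n).degree < (n : ℕ) := by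
    intro n
    rw [Polynomial.degree_lt_iff_coeff_zero]
    intro k hk
    rw [Polynomial.coeff_sub, Polynomial.coeff_derivative, Polynomial.coeff_C_mul]
    rcases eq_or_lt_of_le hk with heq | hk'
    · subst heq
      rw [hcoeff1 (n + 1), hcoeff1 n]
      ring
    · rw [hcoeff0 (n + 1) (k + 1) (by omega), hcoeff0 n k (by omega)]
      simp
  have hd2 : ∀ n : ℕ, (X * derivative (P n) - C (n : ℝ) * P n).degree < ((n : ℕ) : WithBot ℕ) := by
    intro n
    rw [Polynomial.degree_lt_iff_coeff_zero]
    intro k hk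
    rw [Polynomial.coeff_sub, Polynomial.coeff_C_mul]
    rcases Nat.eq_zero_or_pos k with rfl | hkpos
    · have hn0 : n = 0 := by omega
      subst hn0
      simp [Polynomial.mul_coeff_zero]
    · obtain ⟨j, rfl⟩ : ∃ j, k = j + 1 := ⟨k - 1, by omega⟩
      rw [Polynomial.coeff_X_mul, Polynomial.coeff_derivative]
      rcases eq_or_lt_of_le hk with heq | hk'
      · subst heq
        rw [hcoeff1 (j + 1)]
        push_cast
        ring
      · rw [hcoeff0 n (j + 1) (by omega)]
        simp
  -- step relation for h
  have hstep : ∀ n : ℕ, h (n + 1) = γ (n + 1) * h n := by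
    intro n
    have e1 : (X * P n) * P (n + 1)
        = P (n + 1) * P (n + 1) + C (γ n) * (P (n - 1) * P (n + 1)) := by
      rw [rec' n]; ring
    have e2 : (X * P n) * P (n + 1)
        = P n * P (n + 2) + C (γ (n + 1)) * (P n * P n) := by
      have hx : (X * P n) * P (n + 1) = P n * (X * P (n + 1)) := by ring
      rw [hx, rec' (n + 1)]
      simp only [Nat.add_sub_cancel]
      ring
    have v1 : truncL z ((X * P n) * P (n + 1)) = h (n + 1) := by
      rw [e1, truncL_add, truncL_Cmul, horth (n - 1) (n + 1) (by omega), hh (n + 1)]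
      ring
    have v2 : truncL z ((X * P n) * P (n + 1)) = γ (n + 1) * h n := by
      rw [e2, truncL_add, truncL_Cmul, horth n (n + 2) (by omega), hh n]
      ring
    rw [← v1, v2]
  have hγh : ∀ n : ℕ, γ n ^ 2 * h (n - 1) = γ n * h n := by
    intro n
    cases n with
    | zero => simp [hγ0]
    | succ m =>
      rw [hstep m]
      simp only [Nat.add_sub_cancel]
      ring
  -- equation 1
  have eq1 : ∀ n : ℕ, 2 * ((P n).eval z * (P (n + 1)).eval z * Real.exp (-z ^ 2))
      = ((n : ℝ) + 1) * h n - 2 * h (n + 1) := by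
    intro n
    have hder : truncL z (derivative (P n * P (n + 1))) = ((n : ℝ) + 1) * h n := by
      rw [derivative_mul, truncL_add]
      have t1 : truncL z (derivative (P n) * P (n + 1)) = 0 := by
        apply orth
        calc (derivative (P n)).degree ≤ (P n).degree := Polynomial.degree_derivative_le
          _ = ((n : ℕ) : WithBot ℕ) := ddeg n
          _ < (((n + 1 : ℕ) : ℕ) : WithBot ℕ) := by
            exact_mod_cast Nat.lt_succ_self n
      have t2 : P n * derivative (P (n + 1))
          = (derivative (P (n + 1)) - C ((n : ℝ) + 1) * P n) * P n
            + C ((n : ℝ) + 1) * (P n * P n) := by ring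
      rw [t1, t2, truncL_add, truncL_Cmul, orth n _ (hd1 n), hh n]
      ring
    have hXq : truncL z (X * (P n * P (n + 1))) = h (n + 1) := by
      have e1 : X * (P n * P (n + 1))
          = P (n + 1) * P (n + 1) + C (γ n) * (P (n - 1) * P (n + 1)) := by
        have hx : X * (P n * P (n + 1)) = (X * P n) * P (n + 1) := by ring
        rw [hx, rec' n]; ring
      rw [e1, truncL_add, truncL_Cmul, horth (n - 1) (n + 1) (by omega), hh (n + 1)]
      ring
    have hbd := truncL_ibp z (P n * P (n + 1))
    rw [hder, hXq] at hbd
    have hev : (P n * P (n + 1)).eval (-z) = -((P n * P (n + 1)).eval z) := by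
      simp only [eval_mul]
      rw [hpar n z, hpar (n + 1) z, pow_succ]
      rcases neg_one_pow_eq_or ℝ n with h1 | h1 <;> rw [h1] <;> ring
    rw [hev] at hbd
    simp only [eval_mul] at hbd
    linarith [hbd]
  -- equation 2
  have eq2 : ∀ n : ℕ, 2 * (z * ((P n).eval z) ^ 2 * Real.exp (-z ^ 2))
      = (2 * (n : ℝ) + 1) * h n - 2 * h (n + 1) - 2 * (γ n ^ 2 * h (n - 1)) := by
    intro n
    have hder : truncL z (derivative (X * (P n * P n))) = (2 * (n : ℝ) + 1) * h n := by
      rw [derivative_mul, derivative_X, derivative_mul, one_mul]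
      have t2 : X * (derivative (P n) * P n + P n * derivative (P n))
          = C 2 * ((X * derivative (P n) - C (n : ℝ) * P n) * P n)
            + C (2 * (n : ℝ)) * (P n * P n) := by
        simp only [map_mul, map_ofNat]
        ring
      rw [t2, truncL_add, truncL_add, truncL_Cmul, truncL_Cmul,
        orth n _ (hd2 n), hh n]
      ring
    have hXq : truncL z (X * (X * (P n * P n)))
        = h (n + 1) + γ n ^ 2 * h (n - 1) := by
      have e1 : X * (X * (P n * P n))
          = P (n + 1) * P (n + 1)
            + C (γ n) * ((P (n - 1) * P (n + 1)) + ((P (n + 1) * P (n - 1))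
              + C (γ n) * (P (n - 1) * P (n - 1)))) := by
        have hx : X * (X * (P n * P n)) = (X * P n) * (X * P n) := by ring
        rw [hx, rec' n]; ring
      rw [e1, truncL_add, truncL_Cmul, truncL_add, truncL_add, truncL_Cmul,
        horth (n - 1) (n + 1) (by omega), horth (n + 1) (n - 1) (by omega),
        hh (n + 1), hh (n - 1)]
      ring
    have hbd := truncL_ibp z (X * (P n * P n))
    rw [hder, hXq] at hbd
    have hev : (X * (P n * P n)).eval (-z) = -((X * (P n * P n)).eval z) := by
      simp only [eval_mul, eval_X]
      rw [hpar n z]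
      rcases neg_one_pow_eq_or ℝ n with h1 | h1 <;> rw [h1] <;> ring
    rw [hev] at hbd
    simp only [eval_mul, eval_X] at hbd
    nlinarith [hbd]
  -- final assembly
  intro n hn
  obtain ⟨m, rfl⟩ : ∃ m, n = m + 1 := ⟨n - 1, by omega⟩
  have hpos : 0 < h m := by
    rw [hh m]
    exact truncL_sq_pos z hz (P m) (hmonic m).ne_zero
  have A := eq1 m
  have B := eq2 m
  have Cq := eq2 (m + 1)
  rw [hγh m] at B
  rw [hstep (m + 1)] at Cq
  rw [hstep m] at A B Cq
  simp only [Nat.add_sub_cancel] at Cq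
  have hmain : (2 * (z * ((P m).eval z) ^ 2 * Real.exp (-z ^ 2)))
      * (2 * (z * ((P (m + 1)).eval z) ^ 2 * Real.exp (-z ^ 2)))
      = z ^ 2 * (2 * ((P m).eval z * (P (m + 1)).eval z * Real.exp (-z ^ 2))) ^ 2 := by
    ring
  rw [A, B, Cq] at hmain
  push_cast at hmain
  have key2 : (γ (m + 1) * ((((m : ℝ)) / 2 - γ m) + (((m : ℝ) + 1) / 2 - γ (m + 1)))
      * ((((m : ℝ) + 1) / 2 - γ (m + 1)) + (((m : ℝ) + 2) / 2 - γ (m + 1 + 1))))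
      * (h m) ^ 2
      = (z ^ 2 * (((m : ℝ) + 1) / 2 - γ (m + 1)) ^ 2) * (h m) ^ 2 := by
    linear_combination hmain / 4
  have key3 := mul_right_cancel₀ (pow_ne_zero 2 hpos.ne') key2
  simp only [hg, Nat.add_sub_cancel]
  push_cast
  linear_combination key3
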